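/- Let λ_1 ≥ λ_2 ≥ … ≥ λ_n ≥ 0 be real numbers, ğ ∈ ℝⁿ, τ > 0, and C > 0 with (1/n)·Σ_{i=1}^n ğ_i² ≤ C. Let r ∈ {1,…,n} be such that λ_r > 0 and ğ_i = 0 for all i > r, and suppose that for some β ∈ [0,2) the spectral survival function S(t) := (1/n)·Σ_{i : λ_i > t} ğ_i² satisfies S(t) ≤ C·(λ_r/t)^β for all t > 0. Then, with ξ := λ_r/τ, the filtered norm satisfies (1/n)·Σ_{i=1}^n ğ_i²·λ_i²/(λ_i + τ)² ≤ C·(ξ² + (2/(2−β))·ξ^β). -/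

import Mathlib

open MeasureTheory Set intervalIntegral

private lemma stmt8_aux (nn C L τ tb lb b2 : ℝ) (hn : nn ≠ 0) (hτ : τ ≠ 0)
    (htb : tb ≠ 0) (hlb : lb ≠ 0) (hb2 : b2 ≠ 0) :
    (1/(nn*τ^2)) * (nn*C*L^2 + (2*nn*C*lb) * ((τ^2/tb - L^2/lb)/b2))
      = C * (L^2/τ^2) + (2/b2) * C * (lb/tb - L^2/τ^2) := by
  field_simp

set_option maxHeartbeats 1600000 in
theorem stmt8 {n : ℕ} (lam : Fin n → ℝ)
    (hord : ∀ i j : Fin n, i ≤ j → lam j ≤ lam i)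
    (hnn : ∀ i, 0 ≤ lam i)
    (g : Fin n → ℝ) (τ : ℝ) (hτ : 0 < τ)
    (C : ℝ) (hC : 0 < C)
    (hbound : (1/(n:ℝ)) * ∑ i, (g i)^2 ≤ C)
    (r : Fin n) (hr : 0 < lam r)
    (hg0 : ∀ i : Fin n, r < i → g i = 0)
    (β : ℝ) (hβ0 : 0 ≤ β) (hβ2 : β < 2)
    (hS : ∀ t : ℝ, 0 < t →
      (1/(n:ℝ)) * ∑ i ∈ Finset.univ.filter (fun i => t < lam i), (g i)^2
        ≤ C * (lam r / t) ^ β) :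
    (1/(n:ℝ)) * ∑ i, (g i)^2 * (lam i)^2 / (lam i + τ)^2
      ≤ C * ((lam r / τ) ^ (2:ℝ) + (2/(2-β)) * (lam r / τ) ^ β) := by
  have hn : 0 < (n:ℝ) := by exact_mod_cast Fin.pos r
  have h2β : 0 < 2 - β := by linarith
  have hsumg : ∑ i, (g i)^2 ≤ (n:ℝ) * C := by
    rw [one_div, inv_mul_eq_div, div_le_iff₀ hn] at hbound
    linarith [hbound]
  by_cases hcase : τ ≤ lam r
  · -- easy case: ξ ≥ 1
    have hξ : 1 ≤ lam r / τ := (one_le_div hτ).2 hcase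
    have h1 : (1/(n:ℝ)) * ∑ i, (g i)^2 * (lam i)^2 / (lam i + τ)^2
        ≤ (1/(n:ℝ)) * ∑ i, (g i)^2 := by
      refine mul_le_mul_of_nonneg_left (Finset.sum_le_sum ?_) (by positivity)
      intro i _
      have h0 : (0:ℝ) < (lam i + τ)^2 := pow_pos (by linarith [hnn i]) 2
      rw [div_le_iff₀ h0]
      nlinarith [mul_nonneg (mul_nonneg (sq_nonneg (g i)) (hnn i)) hτ.le,
        mul_nonneg (sq_nonneg (g i)) (sq_nonneg τ)]
    have h2 : (1:ℝ) ≤ (lam r / τ) ^ β := Real.one_le_rpow hξ hβ0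
    have h3 : (1:ℝ) ≤ 2/(2-β) := by rw [le_div_iff₀ h2β]; linarith
    have h4 : (0:ℝ) ≤ (lam r / τ) ^ (2:ℝ) := Real.rpow_nonneg (by positivity) _
    have hqu : (1:ℝ) ≤ (2/(2-β)) * (lam r/τ)^β := by nlinarith [h2, h3]
    nlinarith [mul_nonneg hC.le h4, mul_le_mul_of_nonneg_left hqu hC.le, h1, hbound]
  · push_neg at hcase
    have hLτ : lam r ≤ τ := hcase.le
    set L := lam r with hLdef
    set ν : Fin n → ℝ := fun i => max (min (lam i) τ) L with hνdef
    have hν1 : ∀ i, L ≤ ν i := fun i => le_max_right _ _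
    have hν2 : ∀ i, ν i ≤ τ := fun i => max_le (min_le_right _ _) hLτ
    have hν0 : ∀ i, 0 < ν i := fun i => lt_of_lt_of_le hr (hν1 i)
    have hνlam : ∀ i, g i ≠ 0 → ν i ≤ lam i := by
      intro i hgi
      have hir : i ≤ r := by
        by_contra h
        push_neg at h
        exact hgi (hg0 i h)
      exact max_le (min_le_left _ _) (hord i r hir)
    -- Step A
    have stepA : ∀ i, (g i)^2 * (lam i)^2 / (lam i + τ)^2 ≤ (g i)^2 * (ν i)^2 / τ^2 := by
      intro i
      by_cases hgi : g i = 0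
      · simp [hgi]
      · have h1 : (0:ℝ) < (lam i + τ)^2 := pow_pos (by linarith [hnn i]) 2
        rw [div_le_div_iff₀ h1 (pow_pos hτ 2)]
        have hmν : min (lam i) τ ≤ ν i := le_max_left _ _
        have h2 : lam i * τ ≤ min (lam i) τ * (lam i + τ) := by
          rcases le_total (lam i) τ with h | h
          · rw [min_eq_left h]; nlinarith [hnn i, hτ]
          · rw [min_eq_right h]; nlinarith [hnn i, hτ]
        have h3 : lam i * τ ≤ ν i * (lam i + τ) :=
          h2.trans (mul_le_mul_of_nonneg_right hmν (by linarith [hnn i]))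
        have h4 : (lam i * τ) * (lam i * τ) ≤ (ν i * (lam i + τ)) * (ν i * (lam i + τ)) :=
          mul_self_le_mul_self (mul_nonneg (hnn i) hτ.le) h3
        nlinarith [sq_nonneg (g i), h4]
    have hA : (1/(n:ℝ)) * ∑ i, (g i)^2 * (lam i)^2 / (lam i + τ)^2
        ≤ (1/(n:ℝ)) * ∑ i, (g i)^2 * (ν i)^2 / τ^2 :=
      mul_le_mul_of_nonneg_left (Finset.sum_le_sum fun i _ => stepA i) (by positivity)
    -- integral identities
    have hbase : IntervalIntegrable (fun t : ℝ => 2*t) volume L τ :=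
      (continuous_const.mul continuous_id).intervalIntegrable _ _
    have hind : ∀ i : Fin n, IntervalIntegrable
        (fun t => (g i)^2 * Set.indicator {x : ℝ | x ≤ ν i} (fun s => 2*s) t) volume L τ := by
      intro i
      rw [intervalIntegrable_iff]
      have h1 : IntegrableOn (fun t : ℝ => 2*t) (Set.uIoc L τ) volume :=
        (intervalIntegrable_iff).1 hbase
      exact ((h1.indicator measurableSet_Iic).const_mul _)
    have hFi : ∀ i : Fin n,
        ∫ t in L..τ, (g i)^2 * Set.indicator {x : ℝ | x ≤ ν i} (fun s => 2*s) t
          = (g i)^2 * ((ν i)^2 - L^2) := by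
      intro i
      rw [intervalIntegral.integral_const_mul,
        intervalIntegral.integral_indicator (Set.mem_Icc.2 ⟨hν1 i, hν2 i⟩),
        intervalIntegral.integral_const_mul, integral_id]
      ring
    have hsum : ∑ i, (g i)^2 * ((ν i)^2 - L^2)
        = ∫ t in L..τ, ∑ i, (g i)^2 * Set.indicator {x : ℝ | x ≤ ν i} (fun s => 2*s) t := by
      rw [intervalIntegral.integral_finset_sum (fun i _ => hind i)]
      exact Finset.sum_congr rfl fun i _ => (hFi i).symm
    -- integrability of the majorant
    have hτβ : ∀ t : ℝ, 0 < t → (0:ℝ) < t ^ (1-β) := fun t ht => Real.rpow_pos_of_pos ht _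
    have hHint : IntervalIntegrable (fun t : ℝ => (2*(n:ℝ)*C*L^β) * t^(1-β)) volume L τ := by
      apply ContinuousOn.intervalIntegrable
      apply continuousOn_const.mul
      intro x hx
      rw [Set.uIcc_of_le hLτ] at hx
      have hx0 : x ≠ 0 := ne_of_gt (lt_of_lt_of_le hr hx.1)
      exact (Real.continuousAt_rpow_const x _ (Or.inl hx0)).continuousWithinAt
    -- pointwise (a.e.) bound
    have hmono : (∫ t in (L)..τ, ∑ i, (g i)^2 * Set.indicator {x : ℝ | x ≤ ν i} (fun s => 2*s) t)
        ≤ ∫ t in (L)..τ, (2*(n:ℝ)*C*L^β) * t^(1-β) := by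
      have hGint : IntervalIntegrable
          (fun t => ∑ i, (g i)^2 * Set.indicator {x : ℝ | x ≤ ν i} (fun s => 2*s) t) volume L τ := by
        have h := IntervalIntegrable.sum Finset.univ (fun (i : Fin n) _ => hind i)
        rw [Finset.sum_fn] at h
        exact h
      apply intervalIntegral.integral_mono_ae_restrict hLτ hGint hHint
      have hz : volume (Set.range ν) = 0 := (Set.finite_range ν).measure_zero _
      have hae1 : ∀ᵐ t : ℝ ∂(volume.restrict (Icc L τ)), t ∉ Set.range ν := by
        refine Filter.Eventually.filter_mono (MeasureTheory.ae_mono Measure.restrict_le_self) ?_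
        exact (MeasureTheory.measure_eq_zero_iff_ae_notMem.mp hz)
      have hae2 : ∀ᵐ t : ℝ ∂(volume.restrict (Icc L τ)), t ∈ Icc L τ :=
        ae_restrict_mem measurableSet_Icc
      filter_upwards [hae1, hae2] with t ht1 ht2
      obtain ⟨htL, htτ⟩ := ht2
      have ht0 : 0 < t := lt_of_lt_of_le hr htL
      have htβ : (0:ℝ) < t ^ β := Real.rpow_pos_of_pos ht0 _
      have step1 : ∑ i, (g i)^2 * Set.indicator {x : ℝ | x ≤ ν i} (fun s => 2*s) t
          ≤ ∑ i ∈ Finset.univ.filter (fun i => t < lam i), (g i)^2 * (2*t) := by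
        rw [Finset.sum_filter]
        apply Finset.sum_le_sum
        intro i _
        by_cases hgi : g i = 0
        · have hz0 : (g i)^2 = 0 := by rw [hgi]; ring
          rw [hz0, zero_mul]
          split_ifs with h
          · rw [zero_mul]
          · exact le_rfl
        · rw [Set.indicator_apply]
          by_cases hm : t ∈ {x : ℝ | x ≤ ν i}
          · have hlt : t < ν i := lt_of_le_of_ne hm (fun h => ht1 ⟨i, h.symm⟩)
            have hlt2 : t < lam i := lt_of_lt_of_le hlt (hνlam i hgi)
            rw [if_pos hm, if_pos hlt2]
          · rw [if_neg hm]
            split_ifs with h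
            · nlinarith [mul_nonneg (sq_nonneg (g i)) ht0.le]
            · norm_num
      have hStail : ∑ i ∈ Finset.univ.filter (fun i => t < lam i), (g i)^2
          ≤ (n:ℝ) * (C * (L/t)^β) := by
        have := hS t ht0
        rw [one_div, inv_mul_eq_div, div_le_iff₀ hn] at this
        linarith [this]
      have step2 : ∑ i ∈ Finset.univ.filter (fun i => t < lam i), (g i)^2 * (2*t)
          ≤ (2*(n:ℝ)*C*L^β) * t^(1-β) := by
        rw [← Finset.sum_mul]
        have h2t : (0:ℝ) ≤ 2*t := by linarith
        have := mul_le_mul_of_nonneg_right hStail h2t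
        refine this.trans (le_of_eq ?_)
        rw [Real.div_rpow hr.le ht0.le, Real.rpow_sub ht0, Real.rpow_one]
        field_simp
      linarith [step1, step2]
    have hHval : (∫ t in (L)..τ, (2*(n:ℝ)*C*L^β) * t^(1-β))
        = (2*(n:ℝ)*C*L^β) * ((τ^(2-β) - L^(2-β))/(2-β)) := by
      rw [intervalIntegral.integral_const_mul,
        integral_rpow (Or.inl (by linarith : (-1:ℝ) < 1-β))]
      rw [show (1:ℝ)-β+1 = 2-β by ring]
    -- combine
    have hB : ∑ i, (g i)^2 * (ν i)^2
        ≤ (n:ℝ)*C*L^2 + (2*(n:ℝ)*C*L^β) * ((τ^(2-β) - L^(2-β))/(2-β)) := by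
      have e1 : ∑ i, (g i)^2 * (ν i)^2
          = ∑ i, (g i)^2 * L^2 + ∑ i, (g i)^2 * ((ν i)^2 - L^2) := by
        rw [← Finset.sum_add_distrib]
        exact Finset.sum_congr rfl fun i _ => by ring
      have e2 : ∑ i, (g i)^2 * L^2 ≤ (n:ℝ)*C*L^2 := by
        rw [← Finset.sum_mul]
        exact mul_le_mul_of_nonneg_right hsumg (by positivity)
      have e3 : ∑ i, (g i)^2 * ((ν i)^2 - L^2)
          ≤ (2*(n:ℝ)*C*L^β) * ((τ^(2-β) - L^(2-β))/(2-β)) := by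
        rw [hsum, ← hHval]; exact hmono
      linarith [e1.le, e2, e3]
    -- final algebra
    have hLβ : (0:ℝ) < L^β := Real.rpow_pos_of_pos hr _
    have hτβ' : (0:ℝ) < τ^β := Real.rpow_pos_of_pos hτ _
    have hq1 : (L/τ) ^ (2:ℝ) = L^2/τ^2 := by rw [Real.rpow_two, div_pow]
    have hq2 : (L/τ) ^ β = L^β/τ^β := Real.div_rpow hr.le hτ.le _
    have hq3 : τ^(2-β) = τ^2/τ^β := by rw [Real.rpow_sub hτ, Real.rpow_two]
    have hq4 : L^(2-β) = L^2/L^β := by rw [Real.rpow_sub hr, Real.rpow_two]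
    have hmid : (1/(n:ℝ)) * ∑ i, (g i)^2 * (ν i)^2 / τ^2
        ≤ C * (L/τ)^(2:ℝ) + (2/(2-β)) * C * ((L/τ)^β - (L/τ)^(2:ℝ)) := by
      have e4 : (1/(n:ℝ)) * ∑ i, (g i)^2 * (ν i)^2 / τ^2
          = (1/((n:ℝ)*τ^2)) * ∑ i, (g i)^2 * (ν i)^2 := by
        rw [← Finset.sum_div]
        ring
      rw [e4]
      have hn0 : (n:ℝ) ≠ 0 := ne_of_gt hn
      have hτ0 : τ ≠ 0 := ne_of_gt hτ
      have hτβ0 : τ^β ≠ 0 := ne_of_gt hτβ'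
      have hLβ0 : L^β ≠ 0 := ne_of_gt hLβ
      have h2β0 : (2-β) ≠ 0 := ne_of_gt h2β
      have e5 : (1/((n:ℝ)*τ^2)) * ((n:ℝ)*C*L^2 + (2*(n:ℝ)*C*L^β) * ((τ^(2-β) - L^(2-β))/(2-β)))
          = C * (L/τ)^(2:ℝ) + (2/(2-β)) * C * ((L/τ)^β - (L/τ)^(2:ℝ)) := by
        rw [hq1, hq2, hq3, hq4]
        exact stmt8_aux (n:ℝ) C L τ (τ^β) (L^β) (2-β) hn0 hτ0 hτβ0 hLβ0 h2β0
      calc (1/((n:ℝ)*τ^2)) * ∑ i, (g i)^2 * (ν i)^2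
          ≤ (1/((n:ℝ)*τ^2)) * ((n:ℝ)*C*L^2 + (2*(n:ℝ)*C*L^β) * ((τ^(2-β) - L^(2-β))/(2-β))) :=
            mul_le_mul_of_nonneg_left hB (by positivity)
        _ = _ := e5
    have hfin : C * (L/τ)^(2:ℝ) + (2/(2-β)) * C * ((L/τ)^β - (L/τ)^(2:ℝ))
        ≤ C * ((L/τ)^(2:ℝ) + (2/(2-β)) * (L/τ)^β) := by
      have hX : (0:ℝ) ≤ (L/τ)^(2:ℝ) := by rw [hq1]; positivity
      have h5 : (0:ℝ) ≤ 2/(2-β) := le_of_lt (div_pos two_pos h2β)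
      nlinarith [mul_nonneg (mul_nonneg h5 hC.le) hX]
    exact hA.trans (hmid.trans hfin)
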